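/- Suppose d(v) ≤ 2^{i+j} counts leaves adjacent to v among the leaves of 2^i disjoint subtrees each having 2^j leaves, with d(v) ≥ 2^{i+j}/(h−k+1). If v is 'good' for fewer than k of the subtrees (good meaning adjacent to at least 2^{j−1}/(h−k+1) leaves of that subtree), then 2^i ≤ (k−1)(2h−2k+1). -/

import Mathlib

open SimpleGraph

universe u v

section Defs

variable {V : Type u} {W : Type v}

/-- A path decomposition of `G`: a sequence of bags covering all edges and vertices,
with each vertex appearing in a consecutive interval of bags. -/
structure PathDecomp (G : SimpleGraph V) where
  n : ℕ
  bag : Fin (n + 1) → Finset V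
  cov_edge : ∀ ⦃u w : V⦄, G.Adj u w → ∃ i, u ∈ bag i ∧ w ∈ bag i
  cov_vert : ∀ x : V, ∃ i, x ∈ bag i
  interval : ∀ (x : V) (i j k : Fin (n + 1)), i ≤ j → j ≤ k →
    x ∈ bag i → x ∈ bag k → x ∈ bag j

/-- The pathwidth of `G` is at most `w`. -/
def pwLE (G : SimpleGraph V) (w : ℕ) : Prop :=
  ∃ D : PathDecomp G, ∀ i, (D.bag i).card ≤ w + 1

/-- The rooted pathwidth of `G` at `x` is at most `r`: there is a path decomposition
of width `≤ r` whose last bag contains `x`. -/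
def rpwLE (G : SimpleGraph V) (x : V) (r : ℕ) : Prop :=
  ∃ D : PathDecomp G, x ∈ D.bag (Fin.last D.n) ∧ ∀ i, (D.bag i).card ≤ r + 1

/-- The rooted pathwidth of `G` at `x`. -/
noncomputable def rpw (G : SimpleGraph V) (x : V) : ℕ := sInf {r | rpwLE G x r}

/-- `G` has a cycle of length `n`. -/
def HasCycleLen (G : SimpleGraph V) (n : ℕ) : Prop :=
  ∃ (x : V) (c : G.Walk x x), c.IsCycle ∧ c.length = n

/-- The circumference of `G` equals `t` (it is `0` if `G` is acyclic). -/
def CircumEq (G : SimpleGraph V) (t : ℕ) : Prop :=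
  (∀ n, HasCycleLen G n → n ≤ t) ∧ (t = 0 ∨ HasCycleLen G t)

/-- `G` is `k`-connected: it has more than `k` vertices and stays connected after
deleting any set of fewer than `k` vertices. -/
def KConn (G : SimpleGraph V) (k : ℕ) : Prop :=
  k < Nat.card V ∧
  ∀ S : Set V, S.Finite → S.ncard < k → (G.induce Sᶜ).Connected

/-- `G` has `k` pairwise vertex-disjoint cycles, each of length at least `t`. -/
def HasKDisjointCyclesLen (G : SimpleGraph V) (k t : ℕ) : Prop :=
  ∃ c : Fin k → Σ x : V, G.Walk x x,
    (∀ m, (c m).2.IsCycle ∧ t ≤ (c m).2.length) ∧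
    ∀ m m', m ≠ m' → List.Disjoint (c m).2.support (c m').2.support

/-- `H` is a minor of `G`, witnessed by branch sets `br`. -/
def IsMinorWithBranch (G : SimpleGraph V) (H : SimpleGraph W) (br : W → Set V) : Prop :=
  (∀ w, (G.induce (br w)).Connected) ∧
  (∀ w w', w ≠ w' → Disjoint (br w) (br w')) ∧
  (∀ ⦃w w'⦄, H.Adj w w' → ∃ u ∈ br w, ∃ u' ∈ br w', G.Adj u u')

/-- `H` is a minor of `G`. -/
def HasMinor (G : SimpleGraph V) (H : SimpleGraph W) : Prop :=
  ∃ br : W → Set V, IsMinorWithBranch G H br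



/-- A rooted forest on `V`, given by a parent function together with a consistent
height function (the height of a vertex is its distance to the root of its component). -/
structure RootedForest (V : Type u) where
  parent : V → Option V
  height : V → ℕ
  height_root : ∀ x, parent x = none → height x = 0
  height_child : ∀ ⦃x y⦄, parent x = some y → height x = height y + 1

/-- `x` is an ancestor of `y` (possibly `x = y`). -/
def RootedForest.Ancestor (F : RootedForest V) (x y : V) : Prop :=
  Relation.ReflTransGen (fun a b => F.parent a = some b) y x

/-- `x` is a proper ancestor of `y`. -/
def RootedForest.ProperAncestor (F : RootedForest V) (x y : V) : Prop :=
  Relation.TransGen (fun a b => F.parent a = some b) y x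

/-- The treedepth of `G` is at most `d`: there is a rooted forest of height at most
`d - 1` on `V(G)` whose closure contains `G`. -/
def treedepthLE (G : SimpleGraph V) (d : ℕ) : Prop :=
  ∃ F : RootedForest V, (∀ x, F.height x + 1 ≤ d) ∧
    ∀ ⦃x y⦄, G.Adj x y → F.ProperAncestor x y ∨ F.ProperAncestor y x

/-- Vertices of the complete binary tree of height `h`: binary strings of length at
most `h`; the parent of a nonempty string is its tail, the root is the empty string. -/
abbrev CBTVert (h : ℕ) := {l : List Bool // l.length ≤ h}

/-- The complete binary tree of height `h` as a simple graph. -/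
def CBT (h : ℕ) : SimpleGraph (CBTVert h) where
  Adj u w := (∃ b, u.val = b :: w.val) ∨ (∃ b, w.val = b :: u.val)
  symm := by constructor; intro u w hv; tauto
  loopless := by
    constructor
    rintro u (⟨b, hb⟩ | ⟨b, hb⟩) <;>
    · have := congrArg List.length hb
      simp at this

/-- The root of the complete binary tree. -/
def CBTroot (h : ℕ) : CBTVert h := ⟨[], by simp⟩

/-- The `m`-th leaf (in left-to-right order) of the complete binary tree of
height `h`: the binary string of length `h` whose bits are the binary digits of `m`,
most significant first. -/
def leafIdx (h : ℕ) (m : Fin (2 ^ h)) : CBTVert h :=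
  ⟨(List.range h).map fun i => m.val.testBit (h - 1 - i), by simp⟩

/-- The graph obtained from `G` by adding `k` dominant vertices. -/
def addDominant (G : SimpleGraph V) (k : ℕ) : SimpleGraph (V ⊕ Fin k) where
  Adj x y := (∃ a b, x = .inl a ∧ y = .inl b ∧ G.Adj a b) ∨
             (∃ a c, x = .inl a ∧ y = .inr c) ∨
             (∃ c a, x = .inr c ∧ y = .inl a) ∨
             (∃ c c', x = .inr c ∧ y = .inr c' ∧ c ≠ c')
  symm := by
    constructor
    rintro x y (⟨a,b,rfl,rfl,hab⟩|⟨a,c,rfl,rfl⟩|⟨c,a,rfl,rfl⟩|⟨c,c',rfl,rfl,hcc⟩)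
    · exact Or.inl ⟨b,a,rfl,rfl,hab.symm⟩
    · exact Or.inr (Or.inr (Or.inl ⟨c,a,rfl,rfl⟩))
    · exact Or.inr (Or.inl ⟨a,c,rfl,rfl⟩)
    · exact Or.inr (Or.inr (Or.inr ⟨c',c,rfl,rfl,hcc.symm⟩))
  loopless := by
    constructor
    rintro x (⟨a,b,rfl,h,hab⟩|⟨a,c,rfl,h⟩|⟨c,a,rfl,h⟩|⟨c,c',rfl,h,hcc⟩)
    · cases Sum.inl.inj h; exact G.irrefl hab
    · simp at h
    · simp at h
    · cases Sum.inr.inj h; exact hcc rfl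

/-- The minimum size of a transversal of `G` (a set of vertices meeting all cycles). -/
noncomputable def tau (G : SimpleGraph V) : ℕ :=
  sInf {n | ∃ S : Set V, S.ncard = n ∧ (G.induce Sᶜ).IsAcyclic}

/-- `x` is a cut-vertex of `G`. -/
def IsCutVertex (G : SimpleGraph V) (x : V) : Prop :=
  ∃ (u w : V) (hu : u ≠ x) (hw : w ≠ x),
    G.Reachable u w ∧ ¬ (G.induce {y | y ≠ x}).Reachable ⟨u, hu⟩ ⟨w, hw⟩

/-- A block of `G`: a maximal 2-connected subgraph, or a bridge edge,
or an isolated vertex. -/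
def IsBlock (G : SimpleGraph V) (B : G.Subgraph) : Prop :=
  (KConn B.coe 2 ∧ ∀ B' : G.Subgraph, B ≤ B' → KConn B'.coe 2 → B' = B) ∨
  (∃ (u w : V) (huw : G.Adj u w), G.IsBridge s(u, w) ∧ B = G.subgraphOfAdj huw) ∨
  (∃ x : V, (∀ u, ¬ G.Adj x u) ∧ B = G.singletonSubgraph x)

/-- The block-cut-forest of `G`: vertices are the cut-vertices and the blocks of `G`,
with a cut-vertex adjacent to exactly the blocks containing it. -/
def BCF (G : SimpleGraph V) :
    SimpleGraph ({x : V // IsCutVertex G x} ⊕ {B : G.Subgraph // IsBlock G B}) where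
  Adj x y := (∃ v B, x = .inl v ∧ y = .inr B ∧ v.val ∈ B.val.verts) ∨
             (∃ v B, x = .inr B ∧ y = .inl v ∧ v.val ∈ B.val.verts)
  symm := by
    constructor
    rintro x y (⟨v,B,rfl,rfl,hm⟩|⟨v,B,rfl,rfl,hm⟩)
    · exact Or.inr ⟨v,B,rfl,rfl,hm⟩
    · exact Or.inl ⟨v,B,rfl,rfl,hm⟩
  loopless := by
    constructor
    rintro x (⟨v,B,rfl,h,_⟩|⟨v,B,rfl,h,_⟩) <;> simp at h

/-- The octahedron `K_{2,2,2}` minus the edges of a triangle: parts are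
`{i} × {0,1}`; the deleted triangle consists of the vertices `(i, 0)`. -/
def Qgraph : SimpleGraph (Fin 3 × Fin 2) where
  Adj x y := x.1 ≠ y.1 ∧ ¬(x.2 = 0 ∧ y.2 = 0)
  symm := ⟨fun x y h => ⟨h.1.symm, fun hc => h.2 ⟨hc.2, hc.1⟩⟩⟩
  loopless := ⟨fun x h => h.1 rfl⟩

/-- The disjoint union of two triangles. -/
def TwoTriangles : SimpleGraph (Fin 3 ⊕ Fin 3) where
  Adj x y := (∃ a b, x = .inl a ∧ y = .inl b ∧ a ≠ b) ∨
             (∃ a b, x = .inr a ∧ y = .inr b ∧ a ≠ b)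
  symm := by
    constructor
    rintro x y (⟨a,b,rfl,rfl,hab⟩|⟨a,b,rfl,rfl,hab⟩)
    · exact Or.inl ⟨b,a,rfl,rfl,hab.symm⟩
    · exact Or.inr ⟨b,a,rfl,rfl,hab.symm⟩
  loopless := by
    constructor
    rintro x (⟨a,b,rfl,h,hab⟩|⟨a,b,rfl,h,hab⟩) <;>
    · first
      | (cases Sum.inl.inj h; exact hab rfl)
      | (cases Sum.inr.inj h; exact hab rfl)

/-- `A` contains a subdivision of `B` as a subgraph: branch vertices are given by an
injective map `f`, and each edge of `B` is replaced by a path in `A`; distinct edges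
give internally disjoint paths, and no branch vertex lies in the interior of a path. -/
def ContainsSubdivision (A : SimpleGraph V) (B : SimpleGraph W) : Prop :=
  ∃ (f : W → V) (P : ∀ ⦃u w : W⦄, B.Adj u w → A.Walk (f u) (f w)),
    Function.Injective f ∧
    (∀ ⦃u w : W⦄ (h : B.Adj u w), (P h).IsPath) ∧
    (∀ ⦃u w : W⦄ (h : B.Adj u w) (x : W), f x ∈ (P h).support → x = u ∨ x = w) ∧
    (∀ ⦃u w x y : W⦄ (h : B.Adj u w) (h' : B.Adj x y), s(u, w) ≠ s(x, y) →
      ∀ z, z ∈ (P h).support → z ∈ (P h').support →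
        z ∈ ({f u, f w} : Set V) ∩ {f x, f y})


/-- Pigeonhole estimate: if `v` is adjacent to at least
`2^(i+j)/(h-k+1)` of the leaves of `2^i` disjoint subtrees each with `2^j` leaves,
but is "good" (adjacent to at least `2^(j-1)/(h-k+1)` leaves of a subtree) for
fewer than `k` of the subtrees, then `2^i ≤ (k-1)(2h-2k+1)`. -/
theorem stmt14 {W : Type} (h k i j : ℕ) (hk : 1 ≤ k) (hkh : k ≤ h)
    (hi : 0 < i) (hj : 0 < j)
    (A : W → Prop) [DecidablePred A]
    (Lsub : Fin (2 ^ i) → Finset W)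
    (hdisj : ∀ m m', m ≠ m' → Disjoint (Lsub m) (Lsub m'))
    (hcard : ∀ m, (Lsub m).card = 2 ^ j)
    (hd : (2 : ℝ) ^ (i + j) / ((h : ℝ) - (k : ℝ) + 1) ≤
      ((∑ m, ((Lsub m).filter A).card : ℕ) : ℝ))
    (hgood : ({m : Fin (2 ^ i) |
        (2 : ℝ) ^ j / (2 * ((h : ℝ) - (k : ℝ) + 1)) ≤
          (((Lsub m).filter A).card : ℝ)}).ncard < k) :
    (2 : ℝ) ^ i ≤ ((k : ℝ) - 1) * (2 * (h : ℝ) - 2 * (k : ℝ) + 1) := by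
  classical
  set c : ℝ := (h : ℝ) - (k : ℝ) + 1 with hc
  have hkhr : (k : ℝ) ≤ (h : ℝ) := Nat.cast_le.mpr hkh
  have hc1 : (1 : ℝ) ≤ c := by rw [hc]; linarith
  have hcpos : (0 : ℝ) < c := lt_of_lt_of_le one_pos hc1
  set B : ℝ := (2 : ℝ) ^ j / (2 * c) with hB
  set G : Finset (Fin (2 ^ i)) := Finset.univ.filter
    (fun m => B ≤ (((Lsub m).filter A).card : ℝ)) with hG
  -- the good set equals ↑G
  have hset : {m : Fin (2 ^ i) |
      (2 : ℝ) ^ j / (2 * ((h : ℝ) - (k : ℝ) + 1)) ≤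
        (((Lsub m).filter A).card : ℝ)} = ↑G := by
    ext m
    simp only [hG, Finset.coe_filter, Finset.mem_univ, true_and, Set.mem_setOf_eq, hB, hc]
  have hGlt : G.card < k := by
    have := hgood
    rw [hset, Set.ncard_coe_finset] at this
    exact this
  have hgcard : (G.card : ℝ) ≤ (k : ℝ) - 1 := by
    have : (G.card : ℝ) + 1 ≤ (k : ℝ) := by exact_mod_cast hGlt
    linarith
  -- bound on the sum
  have hsum : ((∑ m, ((Lsub m).filter A).card : ℕ) : ℝ)
      = ∑ m, (((Lsub m).filter A).card : ℝ) := by push_cast; ring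
  have hsplit : ∑ m, (((Lsub m).filter A).card : ℝ)
      = ∑ m ∈ G, (((Lsub m).filter A).card : ℝ)
        + ∑ m ∈ Gᶜ, (((Lsub m).filter A).card : ℝ) :=
    (Finset.sum_add_sum_compl G _).symm
  have h1 : ∑ m ∈ G, (((Lsub m).filter A).card : ℝ) ≤ (G.card : ℝ) * 2 ^ j := by
    calc ∑ m ∈ G, (((Lsub m).filter A).card : ℝ)
        ≤ ∑ m ∈ G, (2 : ℝ) ^ j := by
          refine Finset.sum_le_sum fun m _ => ?_
          have h1 := Finset.card_filter_le (Lsub m) A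
          have h2 := hcard m
          have : ((Lsub m).filter A).card ≤ 2 ^ j := h2 ▸ h1
          exact_mod_cast this
      _ = (G.card : ℝ) * 2 ^ j := by
          rw [Finset.sum_const, nsmul_eq_mul]
  have h2 : ∑ m ∈ Gᶜ, (((Lsub m).filter A).card : ℝ) ≤ (Gᶜ.card : ℝ) * B := by
    calc ∑ m ∈ Gᶜ, (((Lsub m).filter A).card : ℝ)
        ≤ ∑ m ∈ Gᶜ, B := by
          refine Finset.sum_le_sum fun m hm => ?_
          have : ¬ (B ≤ (((Lsub m).filter A).card : ℝ)) := by
            intro hcon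
            have : m ∈ G := by simp [hG, hcon]
            exact (Finset.mem_compl.mp hm) this
          linarith [lt_of_not_ge this]
      _ = (Gᶜ.card : ℝ) * B := by rw [Finset.sum_const, nsmul_eq_mul]
  have hGle : G.card ≤ 2 ^ i := by
    simpa using Finset.card_le_card (Finset.subset_univ G)
  have hcompl : (Gᶜ.card : ℝ) = (2 : ℝ) ^ i - (G.card : ℝ) := by
    rw [Finset.card_compl, Fintype.card_fin, Nat.cast_sub hGle]
    push_cast
    ring
  -- combine
  have hd' : (2 : ℝ) ^ i * 2 ^ j / c ≤
      (G.card : ℝ) * 2 ^ j + ((2 : ℝ) ^ i - (G.card : ℝ)) * B := by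
    have : (2 : ℝ) ^ (i + j) = (2 : ℝ) ^ i * 2 ^ j := pow_add 2 i j
    rw [hsum, hsplit] at hd
    rw [← this]
    calc (2 : ℝ) ^ (i + j) / c ≤ _ := hd
      _ ≤ _ := by
        rw [← hcompl]
        exact add_le_add h1 h2
  have hBmul : B * (2 * c) = (2 : ℝ) ^ j := by
    rw [hB, div_mul_cancel₀]
    positivity
  have hdm : (2 : ℝ) ^ i * 2 ^ j ≤
      ((G.card : ℝ) * 2 ^ j + ((2 : ℝ) ^ i - (G.card : ℝ)) * B) * c := by
    exact (div_le_iff₀ hcpos).mp hd'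
  have hpj : (0 : ℝ) < 2 ^ j := by positivity
  have hpi : (0 : ℝ) < 2 ^ i := by positivity
  have hg0 : (0 : ℝ) ≤ (G.card : ℝ) := Nat.cast_nonneg _
  -- 2^i * 2^j ≤ g * (2c - 1) * 2^j
  have key : (2 : ℝ) ^ i ≤ (G.card : ℝ) * (2 * c - 1) := by
    have h2c : (2 : ℝ) ^ i * 2 ^ j * 2 ≤
        ((G.card : ℝ) * 2 ^ j + ((2 : ℝ) ^ i - (G.card : ℝ)) * B) * c * 2 := by
      linarith
    -- expand: RHS*2 = 2cg·2^j + (2^i - g)·B·2c = 2cg·2^j + (2^i - g)·2^j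
    have hexp : ((G.card : ℝ) * 2 ^ j + ((2 : ℝ) ^ i - (G.card : ℝ)) * B) * c * 2
        = 2 * c * (G.card : ℝ) * 2 ^ j + ((2 : ℝ) ^ i - (G.card : ℝ)) * (B * (2 * c)) := by
      ring
    rw [hexp, hBmul] at h2c
    have : (2 : ℝ) ^ i * 2 ^ j ≤ (G.card : ℝ) * (2 * c - 1) * 2 ^ j := by nlinarith
    exact le_of_mul_le_mul_right (by linarith) hpj
  have h2c1 : (0 : ℝ) ≤ 2 * c - 1 := by linarith
  calc (2 : ℝ) ^ i ≤ (G.card : ℝ) * (2 * c - 1) := key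
    _ ≤ ((k : ℝ) - 1) * (2 * c - 1) := mul_le_mul_of_nonneg_right hgcard h2c1
    _ = ((k : ℝ) - 1) * (2 * (h : ℝ) - 2 * (k : ℝ) + 1) := by rw [hc]; ring
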